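/- Let E be a finite directed graph, β > ln ρ(A), G ⊆ E^0 hereditary, and ε ∈ [0,∞)^{E^0} with ε|_G = 0. Set m = (1 - e^{-β}A)^{-1}ε. Then m_v = 0 for all v ∈ G, and m|_{E^0∖G} = (1 - e^{-β}A_{E^0∖G})^{-1}(ε|_{E^0∖G}). -/

import Mathlib

open scoped Classical

def IsPathFun {V E : Type} (r s : E → V) (n : ℕ) (f : Fin n → E) : Prop :=
  ∀ i : Fin n, ∀ h : i.1 + 1 < n, s (f i) = r (f ⟨i.1 + 1, h⟩)

def Reach {V E : Type} (r s : E → V) : V → V → Prop :=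
  Relation.ReflTransGen (fun a b => ∃ e, r e = a ∧ s e = b)

def Hered {V E : Type} (r s : E → V) (H : Set V) : Prop :=
  ∀ v ∈ H, ∀ w, Reach r s v w → w ∈ H

noncomputable def specRad {ι : Type} [Fintype ι] [DecidableEq ι] (A : Matrix ι ι ℝ) : ℝ :=
  sSup (insert 0 ((fun z : ℂ => ‖z‖) '' spectrum ℂ (A.map Complex.ofReal)))

/-- For hereditary G and ε vanishing on G, m = (1 - e^{-β}A)⁻¹ ε vanishes on G and its
restriction to E⁰∖G is (1 - e^{-β}A_{E⁰∖G})⁻¹ (ε|_{E⁰∖G}). -/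
theorem stmt17 {V E : Type} [Fintype V] [Fintype E] [DecidableEq V] (r s : E → V)
    (A : Matrix V V ℝ)
    (hA : ∀ v w, A v w = Nat.card {e : E // r e = v ∧ s e = w})
    (β : ℝ) (hβ : Real.log (specRad A) < β)
    (G : Set V) (hG : Hered r s G)
    (ε : V → ℝ) (hε : ∀ v, 0 ≤ ε v) (hεG : ∀ v ∈ G, ε v = 0)
    (m : V → ℝ) (hm : m = ((1 - Real.exp (-β) • A)⁻¹).mulVec ε) :
    (∀ v ∈ G, m v = 0) ∧
    (fun v : ↥Gᶜ => m v.1) =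
      ((1 - Real.exp (-β) • A.submatrix (Subtype.val : ↥Gᶜ → V) Subtype.val)⁻¹).mulVec
        (fun v : ↥Gᶜ => ε v.1) := by
  classical
  set c : ℝ := Real.exp (-β) with hc
  set B : Matrix V V ℝ := 1 - c • A with hB
  -- no edges from G out of G
  have hA0 : ∀ v ∈ G, ∀ w, w ∉ G → A v w = 0 := by
    intro v hv w hw
    rw [hA]
    have : IsEmpty {e : E // r e = v ∧ s e = w} := by
      constructor
      rintro ⟨e, he1, he2⟩
      exact hw (hG v hv w (Relation.ReflTransGen.single ⟨e, he1, he2⟩))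
    simp
  -- B is invertible
  have hdetB : B.det ≠ 0 := by
    intro h0
    have hec : (Real.exp β : ℝ) * c = 1 := by
      rw [hc, ← Real.exp_add]; simp
    have hmap : B.map (Complex.ofReal) = 1 - (c : ℂ) • A.map Complex.ofReal := by
      ext i j
      by_cases h : i = j <;>
        simp [hB, Matrix.one_apply, h, Matrix.map_apply, Matrix.sub_apply, Matrix.smul_apply]
    have h0c : (1 - (c : ℂ) • A.map Complex.ofReal).det = 0 := by
      rw [← hmap]
      have he : B.map Complex.ofReal = B.map ⇑Complex.ofRealHom := rfl
      rw [he, ← RingHom.mapMatrix_apply, ← RingHom.map_det, h0, map_zero]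
    have hmem : (Real.exp β : ℂ) ∈ spectrum ℂ (A.map Complex.ofReal) := by
      rw [spectrum.mem_iff, Matrix.isUnit_iff_isUnit_det, isUnit_iff_ne_zero, not_not]
      have heq : algebraMap ℂ (Matrix V V ℂ) (Real.exp β : ℂ) - A.map Complex.ofReal =
          (Real.exp β : ℂ) • (1 - (c : ℂ) • A.map Complex.ofReal) := by
        rw [Algebra.algebraMap_eq_smul_one, smul_sub, smul_smul]
        have : (Real.exp β : ℂ) * (c : ℂ) = 1 := by
          rw [← Complex.ofReal_mul, hec, Complex.ofReal_one]
        rw [this, one_smul]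
      rw [heq, Matrix.det_smul, h0c, mul_zero]
    have hfin : (insert 0 ((fun z : ℂ => ‖z‖) ''
        spectrum ℂ (A.map Complex.ofReal))).Finite :=
      (((A.map Complex.ofReal).finite_spectrum).image _).insert 0
    have hle : Real.exp β ≤ specRad A := by
      apply le_csSup hfin.bddAbove
      refine Set.mem_insert_iff.mpr (Or.inr ⟨_, hmem, ?_⟩)
      simp [Complex.norm_real, abs_of_pos (Real.exp_pos β)]
    have hlog : β ≤ Real.log (specRad A) := by
      have := Real.log_le_log (Real.exp_pos β) hle
      rwa [Real.log_exp] at this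
    linarith
  -- notation for the compressed matrix
  set A' : Matrix ↥Gᶜ ↥Gᶜ ℝ := A.submatrix (Subtype.val : ↥Gᶜ → V) Subtype.val with hA'
  set B' : Matrix ↥Gᶜ ↥Gᶜ ℝ := 1 - c • A' with hB'
  -- sum splitting
  have hsplit : ∀ (f : V → ℝ), (∀ w ∈ G, f w = 0) → ∑ w, f w = ∑ w : ↥Gᶜ, f w.1 := by
    intro f hf
    rw [← Fintype.sum_subtype_add_sum_subtype (fun x => x ∈ Gᶜ) f]
    have : ∑ w : { x // ¬ x ∈ Gᶜ }, f w.1 = 0 := by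
      apply Finset.sum_eq_zero
      intro w _
      exact hf w.1 (not_not.mp w.2)
    rw [this, add_zero]
  -- key computation: A applied to a vector vanishing on G
  have hkey : ∀ (z : V → ℝ), (∀ w ∈ G, z w = 0) →
      (∀ v ∈ G, A.mulVec z v = 0) ∧
      (∀ v : ↥Gᶜ, A.mulVec z v.1 = A'.mulVec (fun i => z i.1) v) := by
    intro z hz
    constructor
    · intro v hv
      simp only [Matrix.mulVec, dotProduct]
      apply Finset.sum_eq_zero
      intro w _
      by_cases hw : w ∈ G
      · rw [hz w hw, mul_zero]
      · rw [hA0 v hv w hw, zero_mul]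
    · intro v
      simp only [Matrix.mulVec, dotProduct, hA', Matrix.submatrix_apply]
      exact hsplit (fun w => A v.1 w * z w) (fun w hw => by simp [hz w hw])
  -- B' is invertible
  have hdetB' : B'.det ≠ 0 := by
    intro h0
    obtain ⟨x, hx0, hx⟩ := Matrix.exists_mulVec_eq_zero_iff.mpr h0
    set y : V → ℝ := fun v => if h : v ∈ G then 0 else x ⟨v, h⟩ with hy
    have hyG : ∀ w ∈ G, y w = 0 := fun w hw => dif_pos hw
    have hyx : (fun i : ↥Gᶜ => y i.1) = x := by
      funext i; exact dif_neg i.2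
    have hy0 : B.mulVec y = 0 := by
      funext v
      rw [hB, Matrix.sub_mulVec, Matrix.one_mulVec, Matrix.smul_mulVec]
      by_cases hv : v ∈ G
      · simp [hyG v hv, (hkey y hyG).1 v hv]
      · have h1 := (hkey y hyG).2 ⟨v, hv⟩
        have h2 : B'.mulVec x ⟨v, hv⟩ = 0 := by rw [hx]; rfl
        rw [hB', Matrix.sub_mulVec, Matrix.one_mulVec, Matrix.smul_mulVec] at h2
        simp only [Pi.sub_apply, Pi.smul_apply, smul_eq_mul] at h2 ⊢
        rw [h1, hyx]
        have : y v = x ⟨v, hv⟩ := dif_neg hv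
        rw [this]
        simpa using h2
    have : y ≠ 0 := by
      intro h
      apply hx0
      funext i
      have := congrFun h i.1
      rwa [← hyx]
    exact hdetB (Matrix.exists_mulVec_eq_zero_iff.mp ⟨y, this, hy0⟩)
  -- the candidate solution
  set m' : ↥Gᶜ → ℝ := (B'⁻¹).mulVec (fun v : ↥Gᶜ => ε v.1) with hm'
  set y : V → ℝ := fun v => if h : v ∈ G then 0 else m' ⟨v, h⟩ with hy
  have hyG : ∀ w ∈ G, y w = 0 := fun w hw => dif_pos hw
  have hyx : (fun i : ↥Gᶜ => y i.1) = m' := by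
    funext i; exact dif_neg i.2
  have hB'm' : B'.mulVec m' = fun v : ↥Gᶜ => ε v.1 := by
    rw [hm', Matrix.mulVec_mulVec, Matrix.mul_nonsing_inv _ (isUnit_iff_ne_zero.mpr hdetB'),
      Matrix.one_mulVec]
  have hBy : B.mulVec y = ε := by
    funext v
    rw [hB, Matrix.sub_mulVec, Matrix.one_mulVec, Matrix.smul_mulVec]
    by_cases hv : v ∈ G
    · simp [hyG v hv, (hkey y hyG).1 v hv, hεG v hv]
    · have h1 := (hkey y hyG).2 ⟨v, hv⟩
      have h2 : B'.mulVec m' ⟨v, hv⟩ = ε v := by rw [hB'm']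
      rw [hB', Matrix.sub_mulVec, Matrix.one_mulVec, Matrix.smul_mulVec] at h2
      simp only [Pi.sub_apply, Pi.smul_apply, smul_eq_mul] at h2 ⊢
      rw [h1, hyx]
      have : y v = m' ⟨v, hv⟩ := dif_neg hv
      rw [this]
      exact h2
  have hmy : m = y := by
    rw [hm, ← hBy, Matrix.mulVec_mulVec,
      Matrix.nonsing_inv_mul _ (isUnit_iff_ne_zero.mpr hdetB), Matrix.one_mulVec]
  constructor
  · intro v hv
    rw [hmy]; exact hyG v hv
  · funext i
    rw [hmy]
    exact congrFun hyx i
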